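/- For Pair Matching, there exists a randomized online algorithm that in expectation answers correctly on at least 2n/3 input items on every input of length n. Formally: there exists a behavioral strategy p : List ℚ → ℚ → ℝ with 0 ≤ p h x ≤ 1 for all h, x (the probability of answering 'accept' on item x after seeing history h) such that for every input x₁,…,xₙ of pairwise distinct rationals in [0,1], the expected number of correct answers Σᵢ qᵢ is at least 2n/3, where qᵢ = p [x₁,…,x_{i−1}] x_i if the correct answer for x_i is 'accept' and qᵢ = 1 − p [x₁,…,x_{i−1}] x_i otherwise. Concretely the strategy that accepts with probability 1 when a previous item x_j satisfies x_i + x_j = 1 and otherwise rejects with probability 2/3 achieves expected number of correct answers exactly (2/3)n. -/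

import Mathlib

/-- The correct answer for item `i` of a Pair Matching input: `true` ('accept')
iff some other item of the input has matching value `1 − xᵢ`. -/
def pmCorrect (l : List ℚ) (i : Fin l.length) : Bool :=
  decide (∃ j : Fin l.length, j ≠ i ∧ l.get i + l.get j = 1)

open Classical in
noncomputable def pmPartner (l : List ℚ) (i : Fin l.length) : Fin l.length :=
  if h : ∃ j : Fin l.length, j ≠ i ∧ l.get i + l.get j = 1 then h.choose else i

section aux
variable {l : List ℚ}

lemma pmCorrect_iff (i : Fin l.length) :
    pmCorrect l i = true ↔ ∃ j : Fin l.length, j ≠ i ∧ l.get i + l.get j = 1 := by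
  simp [pmCorrect]

lemma pmPartner_spec {i : Fin l.length} (h : pmCorrect l i = true) :
    pmPartner l i ≠ i ∧ l.get i + l.get (pmPartner l i) = 1 := by
  rw [pmCorrect_iff] at h
  rw [pmPartner, dif_pos h]
  exact h.choose_spec

lemma pmPartner_fix {i : Fin l.length} (h : pmCorrect l i = false) :
    pmPartner l i = i := by
  rw [pmPartner, dif_neg]
  intro hh
  exact absurd ((pmCorrect_iff i).mpr hh) (by simp [h])

lemma take_cond_iff (i : Fin l.length) :
    (∃ y ∈ l.take (i : ℕ), l.get i + y = 1) ↔
      ∃ j : Fin l.length, (j : ℕ) < (i : ℕ) ∧ l.get i + l.get j = 1 := by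
  constructor
  · rintro ⟨y, hy, hsum⟩
    obtain ⟨k, hk⟩ := List.mem_iff_get.mp hy
    have h2 : (k : ℕ) < min (i : ℕ) l.length := by simpa using k.isLt
    have hki : (k : ℕ) < (i : ℕ) := by omega
    have hkl : (k : ℕ) < l.length := by omega
    refine ⟨⟨k, hkl⟩, hki, ?_⟩
    have : (l.take (i : ℕ)).get k = l.get ⟨k, hkl⟩ := by
      simp [List.get_eq_getElem, List.getElem_take]
    rw [← this, hk]; exact hsum
  · rintro ⟨j, hji, hsum⟩
    refine ⟨l.get j, ?_, hsum⟩
    have hj' : (j : ℕ) < (l.take (i : ℕ)).length := by simp [hji, j.isLt]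
    have : (l.take (i : ℕ)).get ⟨j, hj'⟩ = l.get j := by
      simp [List.get_eq_getElem, List.getElem_take]
    rw [← this]; exact List.get_mem _ _
end aux

lemma pmPartner_partner {l : List ℚ} (hnd : l.Nodup) {i : Fin l.length}
    (h : pmCorrect l i = true) :
    pmCorrect l (pmPartner l i) = true ∧ pmPartner l (pmPartner l i) = i := by
  have inj : Function.Injective l.get := List.nodup_iff_injective_get.mp hnd
  obtain ⟨hne, hsum⟩ := pmPartner_spec h
  have hc : pmCorrect l (pmPartner l i) = true := by
    rw [pmCorrect_iff]
    exact ⟨i, fun e => hne e.symm, by linarith⟩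
  refine ⟨hc, ?_⟩
  obtain ⟨hne2, hsum2⟩ := pmPartner_spec hc
  apply inj
  linarith


/-- For Pair Matching there is a randomized online algorithm (in behavioral
form, `p h x` being the probability of accepting `x` after history `h`) whose
expected number of correct answers is at least `2n/3` on every input of
pairwise distinct rationals in `[0,1]`; concretely, the strategy accepting with
probability `1` when a previous item matches and otherwise accepting with
probability `1/3` (i.e., rejecting with probability `2/3`) achieves expected
number of correct answers exactly `(2/3)n`. -/
theorem pm_online_randomized_upper_bound :
    ∃ p : List ℚ → ℚ → ℝ,
      (∀ h x, 0 ≤ p h x ∧ p h x ≤ 1) ∧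
      (∀ h x, p h x = if ∃ y ∈ h, x + y = 1 then 1 else 1 / 3) ∧
      ∀ l : List ℚ, l.Nodup → (∀ x ∈ l, 0 ≤ x ∧ x ≤ 1) →
        2 * (l.length : ℝ) / 3 ≤
          (∑ i : Fin l.length,
            (if pmCorrect l i then p (l.take (i : ℕ)) (l.get i)
             else 1 - p (l.take (i : ℕ)) (l.get i))) ∧
        (∑ i : Fin l.length,
            (if pmCorrect l i then p (l.take (i : ℕ)) (l.get i)
             else 1 - p (l.take (i : ℕ)) (l.get i))) = 2 * (l.length : ℝ) / 3 := by
  classical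
  refine ⟨fun h x => if ∃ y ∈ h, x + y = 1 then 1 else 1/3, ?_, fun h x => by norm_num, ?_⟩
  · intro h x
    by_cases hc : ∃ y ∈ h, x + y = 1 <;> simp [hc] <;> norm_num
  intro l hnd _
  have inj : Function.Injective l.get := List.nodup_iff_injective_get.mp hnd
  set q : Fin l.length → ℝ := fun i =>
    if pmCorrect l i then (if ∃ y ∈ l.take (i : ℕ), l.get i + y = 1 then (1:ℝ) else 1/3)
    else 1 - (if ∃ y ∈ l.take (i : ℕ), l.get i + y = 1 then (1:ℝ) else 1/3) with hq
  have qfalse : ∀ i, pmCorrect l i = false → q i = 2/3 := by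
    intro i hi
    have hno : ¬ ∃ y ∈ l.take (i : ℕ), l.get i + y = 1 := by
      rw [take_cond_iff]
      rintro ⟨j, hji, hsum⟩
      have : pmCorrect l i = true := by
        rw [pmCorrect_iff]
        exact ⟨j, fun e => by simp [e] at hji, hsum⟩
      simp [this] at hi
    have h1 : q i = 1 - (if ∃ y ∈ l.take (i : ℕ), l.get i + y = 1 then (1:ℝ) else 1/3) :=
      if_neg (by simp [hi])
    rw [h1, if_neg hno]; norm_num
  have qlt : ∀ i, pmCorrect l i = true → (pmPartner l i : ℕ) < (i : ℕ) → q i = 1 := by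
    intro i hi hlt
    have hyes : ∃ y ∈ l.take (i : ℕ), l.get i + y = 1 := by
      rw [take_cond_iff]
      exact ⟨pmPartner l i, hlt, (pmPartner_spec hi).2⟩
    have h1 : q i = (if ∃ y ∈ l.take (i : ℕ), l.get i + y = 1 then (1:ℝ) else 1/3) :=
      if_pos hi
    rw [h1, if_pos hyes]
  have qgt : ∀ i, pmCorrect l i = true → (i : ℕ) < (pmPartner l i : ℕ) → q i = 1/3 := by
    intro i hi hlt
    have hno : ¬ ∃ y ∈ l.take (i : ℕ), l.get i + y = 1 := by
      rw [take_cond_iff]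
      rintro ⟨j, hji, hsum⟩
      have hj : j = pmPartner l i := by
        apply inj
        have := (pmPartner_spec hi).2
        linarith
      omega
    have h1 : q i = (if ∃ y ∈ l.take (i : ℕ), l.get i + y = 1 then (1:ℝ) else 1/3) :=
      if_pos hi
    rw [h1, if_neg hno]
  have hsum0 : (∑ i : Fin l.length, (q i - 2/3)) = 0 := by
    apply Finset.sum_ninvolution (g := pmPartner l)
    · intro i
      by_cases hi : pmCorrect l i = true
      · have hp := pmPartner_partner hnd hi
        have hne : pmPartner l i ≠ i := (pmPartner_spec hi).1
        rcases lt_or_gt_of_ne (fun e : (pmPartner l i : ℕ) = (i : ℕ) => hne (Fin.ext e)) with h1 | h1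
        · rw [qlt i hi h1, qgt (pmPartner l i) hp.1 (by rw [hp.2]; exact h1)]
          ring
        · rw [qgt i hi h1, qlt (pmPartner l i) hp.1 (by rw [hp.2]; exact h1)]
          ring
      · rw [Bool.not_eq_true] at hi
        rw [pmPartner_fix hi, qfalse i hi]; ring
    · intro i hi
      by_cases h : pmCorrect l i = true
      · exact (pmPartner_spec h).1
      · exfalso
        rw [Bool.not_eq_true] at h
        rw [qfalse i h] at hi; norm_num at hi
    · intro i; exact Finset.mem_univ _
    · intro i
      by_cases h : pmCorrect l i = true
      · exact (pmPartner_partner hnd h).2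
      · rw [Bool.not_eq_true] at h
        rw [pmPartner_fix h, pmPartner_fix h]
  have key : (∑ i : Fin l.length, q i) = 2 * (l.length : ℝ) / 3 := by
    have := hsum0
    rw [Finset.sum_sub_distrib] at this
    simp only [Finset.sum_const, Finset.card_univ, Fintype.card_fin, nsmul_eq_mul] at this
    linarith
  exact ⟨le_of_eq key.symm, key⟩
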